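/- Let n ≥ 4 be even. If G is an (n−3)-regular graph on n vertices that is (a,d)-distance antimagic for some a and d ≥ 1, then d = 1. -/

import Mathlib

open scoped Classical
open Finset

/-- Weight of a vertex: sum of labels over its open neighborhood. -/
noncomputable def wsum {V : Type*} [Fintype V] (G : SimpleGraph V) (f : V → ℕ) (u : V) : ℕ :=
  ∑ v ∈ Finset.univ.filter (fun v => G.Adj u v), f v

/-- A graph is distance magic if some bijective labeling by 1,...,n has constant weights. -/
def IsDistanceMagic {V : Type*} [Fintype V] (G : SimpleGraph V) : Prop :=
  ∃ (f : V ≃ Fin (Fintype.card V)) (c : ℕ),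
    ∀ u, wsum G (fun v => (f v : ℕ) + 1) u = c

/-- `G` is `r`-regular. -/
def IsRegularDeg {V : Type*} [Fintype V] (G : SimpleGraph V) (r : ℕ) : Prop :=
  ∀ u : V, (Finset.univ.filter (fun v => G.Adj u v)).card = r

/-- `(a,d)`-distance antimagic: some bijective labeling by 1,...,n has weight set
`{a, a+d, ..., a+(n-1)d}`. -/
def IsDistAntimagic {V : Type*} [Fintype V] (G : SimpleGraph V) (a d : ℕ) : Prop :=
  ∃ f : V ≃ Fin (Fintype.card V),
    Finset.image (fun u => wsum G (fun v => (f v : ℕ) + 1) u) Finset.univ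
      = Finset.image (fun i : Fin (Fintype.card V) => a + (i : ℕ) * d) Finset.univ

/-- Circulant graph on `N` vertices with jumps `1,...,m` (so `H_{2m,N} = C_N^m`). -/
def circulant (N m : ℕ) : SimpleGraph (Fin N) :=
  SimpleGraph.fromRel (fun i j => ∃ k, 1 ≤ k ∧ k ≤ m ∧ ((i : ℕ) + k) % N = (j : ℕ))

/-- The graph `(K_{n-1} - M) + K_1`: vertex `0` joined to all, and vertices `1,...,n-1`
forming a complete graph minus the perfect matching pairing `i` with `i + (n-1)/2 (mod n-1)`. -/
def calG (n : ℕ) : SimpleGraph (Fin n) :=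
  SimpleGraph.fromRel (fun i j =>
    (i : ℕ) = 0 ∨ (j : ℕ) = 0 ∨
      ¬ (((i : ℕ) - 1 + (n - 1) / 2) % (n - 1) = (j : ℕ) - 1))

/-- Lexicographic product `G ∘ H`. -/
def lexProd {α β : Type*} (G : SimpleGraph α) (H : SimpleGraph β) : SimpleGraph (α × β) where
  Adj x y := G.Adj x.1 y.1 ∨ (x.1 = y.1 ∧ H.Adj x.2 y.2)
  symm := by
    refine ⟨?_⟩
    rintro ⟨a, b⟩ ⟨c, d⟩ (h | ⟨h1, h2⟩)
    · exact Or.inl h.symm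
    · exact Or.inr ⟨h1.symm, h2.symm⟩
  loopless := by
    refine ⟨?_⟩
    rintro ⟨a, b⟩ (h | ⟨-, h⟩)
    · exact G.irrefl h
    · exact H.irrefl h

/-- Direct (tensor) product `G × H`. -/
def tensorProd {α β : Type*} (G : SimpleGraph α) (H : SimpleGraph β) : SimpleGraph (α × β) where
  Adj x y := G.Adj x.1 y.1 ∧ H.Adj x.2 y.2
  symm := ⟨fun _ _ h => ⟨h.1.symm, h.2.symm⟩⟩
  loopless := ⟨fun x h => G.irrefl h.1⟩

/-- The Harary graph `H_{3,n}`. -/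
noncomputable def harary3 (n : ℕ) : SimpleGraph (Fin n) :=
  circulant n 1 ⊔ SimpleGraph.fromRel (fun i j =>
    if n % 2 = 0 then
      ∃ k, 1 ≤ k ∧ k ≤ n / 2 ∧ (i : ℕ) = k ∧ (j : ℕ) = (k + n / 2) % n
    else
      ((i : ℕ) = 0 ∧ ((j : ℕ) = (n - 1) / 2 ∨ (j : ℕ) = (n + 1) / 2)) ∨
      (∃ k, 1 ≤ k ∧ k < (n - 1) / 2 ∧ (i : ℕ) = k ∧ (j : ℕ) = (k + (n + 1) / 2) % n))

/-- The Harary graph `H_{2n+1,2n+3}`: `C_{2n+3}^n` together with edges `v_0 v_{n+1}`,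
`v_0 v_{n+2}` and `v_i v_{i+n+2}` for `1 ≤ i < n+1`. -/
def hararyOdd (n : ℕ) : SimpleGraph (Fin (2 * n + 3)) :=
  circulant (2 * n + 3) n ⊔ SimpleGraph.fromRel (fun i j =>
    ((i : ℕ) = 0 ∧ ((j : ℕ) = n + 1 ∨ (j : ℕ) = n + 2)) ∨
    (∃ k, 1 ≤ k ∧ k < n + 1 ∧ (i : ℕ) = k ∧ (j : ℕ) = k + n + 2))

/-- The Harary graph `H_{4n+1,4n+4}`: circulant with jumps `1,...,2n` and `2n+2`. -/
def harary41 (n : ℕ) : SimpleGraph (Fin (4 * n + 4)) :=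
  SimpleGraph.fromRel (fun i j =>
    ∃ k, ((1 ≤ k ∧ k ≤ 2 * n) ∨ k = 2 * n + 2) ∧ ((i : ℕ) + k) % (4 * n + 4) = (j : ℕ))

/-- The join `G + K_1`. -/
def joinK1 {V : Type*} (G : SimpleGraph V) : SimpleGraph (V ⊕ Unit) :=
  SimpleGraph.fromRel (fun x y =>
    match x, y with
    | Sum.inl a, Sum.inl b => G.Adj a b
    | Sum.inl _, Sum.inr _ => True
    | Sum.inr _, _ => False)

/-- for n ≥ 4 even, an (n-3)-regular (a,d)-distance antimagic graph on n
vertices (d ≥ 1) has d = 1. -/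
theorem regular_antimagic_d_eq_one {V : Type*} [Fintype V] (n : ℕ) (hn : 4 ≤ n)
    (heven : Even n) (hV : Fintype.card V = n) (G : SimpleGraph V)
    (hreg : IsRegularDeg G (n - 3)) (a d : ℕ) (hd : 1 ≤ d)
    (h : IsDistAntimagic G a d) : d = 1 := by
  subst hV
  set n := Fintype.card V with hncard
  obtain ⟨f, hf⟩ := h
  set g : V → ℕ := fun v => (f v : ℕ) + 1 with hg
  have hginj : Function.Injective g := by
    intro x y hxy
    exact f.injective (Fin.ext (by simpa [hg] using hxy))
  have hgle : ∀ v, g v ≤ n := fun v => Nat.succ_le_of_lt (f v).isLt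
  have hgge : ∀ v, 1 ≤ g v := fun v => Nat.le_add_left 1 _
  set W : V → ℕ := fun u => wsum G g u with hW
  set S : ℕ := ∑ v, g v with hS
  set T : ℕ := ∑ i ∈ Finset.range n, i with hT
  -- injectivity of i ↦ a + i*d
  have hinj2 : Function.Injective (fun i : Fin n => a + (i : ℕ) * d) := by
    intro i j hij
    simp only at hij
    have : (i : ℕ) * d = (j : ℕ) * d := by omega
    exact Fin.ext (Nat.eq_of_mul_eq_mul_right (by omega) this)
  -- W is injective on univ
  have hWinj : Set.InjOn W (univ : Finset V) := by
    rw [← Finset.card_image_iff, hf, Finset.card_image_of_injective _ hinj2]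
    simp
    exact hncard
  -- sum of weights two ways
  have hsumW : ∑ u, W u = ∑ i : Fin n, (a + (i : ℕ) * d) := by
    have h1 : ∑ w ∈ Finset.image W univ, w = ∑ u, W u :=
      Finset.sum_image (fun x hx y hy hxy => hWinj (by simp) (by simp) hxy)
    have h2 : ∑ w ∈ Finset.image (fun i : Fin n => a + (i : ℕ) * d) univ, w
        = ∑ i : Fin n, (a + (i : ℕ) * d) :=
      Finset.sum_image (fun x _ y _ hxy => hinj2 hxy)
    rw [← h1, hf, h2]
  have hsum2 : ∑ i : Fin n, (a + (i : ℕ) * d) = n * a + T * d := by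
    rw [Finset.sum_add_distrib, ← Finset.sum_mul, Finset.sum_const, Finset.card_univ,
      Fintype.card_fin, smul_eq_mul, hT, Fin.sum_univ_eq_sum_range (fun i => i) n]
  have hsum1 : ∑ u, W u = (n - 3) * S := by
    calc ∑ u, W u = ∑ u, ∑ v, if G.Adj u v then g v else 0 := by
          apply Finset.sum_congr rfl
          intro u _
          rw [hW]
          simp [wsum, Finset.sum_filter]
      _ = ∑ v, ∑ u, if G.Adj u v then g v else 0 := Finset.sum_comm
      _ = ∑ v, (n - 3) * g v := by
          apply Finset.sum_congr rfl
          intro v _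
          rw [← Finset.sum_filter, Finset.sum_const, smul_eq_mul]
          congr 1
          have : (univ.filter (fun u => G.Adj u v)) = (univ.filter (fun u => G.Adj v u)) := by
            apply Finset.filter_congr
            intro x _
            simp [SimpleGraph.adj_comm]
          rw [this, hreg v]
      _ = (n - 3) * S := by rw [hS, Finset.mul_sum]
  -- S = T + n
  have hSval : S = T + n := by
    rw [hS, hT]
    have : ∑ v, g v = ∑ i : Fin n, ((i : ℕ) + 1) :=
      Fintype.sum_equiv f _ _ (fun v => rfl)
    rw [this, Fin.sum_univ_eq_sum_range (fun i => i + 1) n, Finset.sum_add_distrib,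
      Finset.sum_const, Finset.card_range, smul_eq_mul, mul_one]
  -- per-vertex decomposition
  have hdecomp : ∀ u : V, ∃ t, W u + t = S ∧ 6 ≤ t ∧ t ≤ 3 * n - 3 := by
    intro u
    refine ⟨∑ v ∈ univ.filter (fun v => ¬ G.Adj u v), g v, ?_, ?_⟩
    · exact Finset.sum_filter_add_sum_filter_not univ _ g
    · have hc : (univ.filter (fun v => ¬ G.Adj u v)).card = 3 := by
        have h1 := Finset.card_filter_add_card_filter_not
          (s := (univ : Finset V)) (p := fun v => G.Adj u v)
        rw [hreg u, Finset.card_univ] at h1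
        omega
      obtain ⟨x, y, z, hxy, hxz, hyz, hset⟩ := Finset.card_eq_three.mp hc
      rw [hset, Finset.sum_insert (by simp [hxy, hxz]), Finset.sum_pair hyz]
      have n1 : g x ≠ g y := fun hh => hxy (hginj hh)
      have n2 : g x ≠ g z := fun hh => hxz (hginj hh)
      have n3 : g y ≠ g z := fun hh => hyz (hginj hh)
      have := hgle x; have := hgle y; have := hgle z
      have := hgge x; have := hgge y; have := hgge z
      omega
  -- extremes
  have hmem : ∀ i : Fin n, ∃ u : V, W u = a + (i : ℕ) * d := by
    intro i
    have hm : a + (i : ℕ) * d ∈ Finset.image (fun i : Fin n => a + (i : ℕ) * d) univ :=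
      Finset.mem_image_of_mem _ (Finset.mem_univ i)
    rw [← hf] at hm
    obtain ⟨u, _, hu⟩ := Finset.mem_image.mp hm
    exact ⟨u, hu⟩
  have hnpos : 0 < n := by omega
  obtain ⟨u0, hu0⟩ := hmem ⟨0, hnpos⟩
  obtain ⟨u1, hu1⟩ := hmem ⟨n - 1, by omega⟩
  simp only [Fin.val_mk, Nat.zero_mul, Nat.add_zero] at hu0 hu1
  obtain ⟨t0, ht0, ht0l, ht0u⟩ := hdecomp u0
  obtain ⟨t1, ht1, ht1l, ht1u⟩ := hdecomp u1
  rw [hu0] at ht0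
  rw [hu1] at ht1
  have hspan : (n - 1) * d ≤ 3 * n - 9 := by
    generalize hP : (n - 1) * d = P at ht1 ⊢
    omega
  -- master equation
  have E1 : (n - 3) * (T + n) = n * a + T * d := by
    rw [← hSval, ← hsum1, hsumW, hsum2]
  -- parity: d is odd
  obtain ⟨m, hm⟩ := heven
  have hk : n = 2 * (m - 2) + 4 := by omega
  set k : ℕ := m - 2 with hkdef
  have hn1 : n - 1 = 2 * k + 3 := by omega
  have hn3 : n - 3 = 2 * k + 1 := by omega
  have hT2 : T * 2 = n * (n - 1) := Finset.sum_range_id_mul_two n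
  rw [hn1, hk] at hT2
  have hTval : T = (k + 2) * (2 * k + 3) :=
    Nat.eq_of_mul_eq_mul_right two_pos (hT2.trans (by ring))
  rw [hn3, hTval, hk] at E1
  have key : 2 * a + d * (2 * k + 3) = (2 * k + 1) * (2 * k + 5) := by
    apply Nat.eq_of_mul_eq_mul_left (show 0 < k + 2 by omega)
    calc (k + 2) * (2 * a + d * (2 * k + 3))
        = (2 * (m - 2) + 4) * a + ((k + 2) * (2 * k + 3)) * d := by rw [hkdef]; ring
      _ = (2 * k + 1) * ((k + 2) * (2 * k + 3) + (2 * (m - 2) + 4)) := E1.symm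
      _ = (k + 2) * ((2 * k + 1) * (2 * k + 5)) := by rw [hkdef]; ring
  have hDodd : Odd (d * (2 * k + 3)) := by
    obtain ⟨s, hs⟩ : ∃ s, (2 * k + 1) * (2 * k + 5) = 2 * s + 1 :=
      ⟨2 * k * k + 6 * k + 2, by ring⟩
    rw [hs] at key
    generalize hD : d * (2 * k + 3) = D at key ⊢
    exact ⟨s - a, by omega⟩
  have hdodd : Odd d := (Nat.odd_mul.mp hDodd).1
  by_contra hne
  have hd3 : 3 ≤ d := by obtain ⟨j, hj⟩ := hdodd; omega
  have hmul : (n - 1) * 3 ≤ (n - 1) * d := Nat.mul_le_mul_left _ hd3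
  have := le_trans hmul hspan
  omega
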